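/- 1D generalized Lax–Friedrichs splitting property: let Û = (ρ̂, m̂, B̂, Ê) and Ǔ = (ρ̌, m̌, B̌, Ě) belong to 𝒢 with pressures p̂, p̌ > 0 and satisfy the 1D discrete divergence-free condition B̂₁ = B̌₁. Then for every α > α₁(Û, Ǔ), the state Ū := (1/2)( Û − F₁(Û)/α + Ǔ + F₁(Ǔ)/α ) belongs to 𝒢. -/

import Mathlib

open scoped BigOperators

noncomputable section

/-- Euclidean dot product on ℝ³. -/
def dot3 (a b : Fin 3 → ℝ) : ℝ := ∑ j, a j * b j

/-- Squared Euclidean norm on ℝ³. -/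
def normSq3 (a : Fin 3 → ℝ) : ℝ := ∑ j, (a j) ^ 2

/-- Momentum components of a state `U = (ρ, m, B, E) ∈ ℝ⁸`. -/
def mC (U : Fin 8 → ℝ) : Fin 3 → ℝ := ![U 1, U 2, U 3]

/-- Magnetic-field components of a state. -/
def BC (U : Fin 8 → ℝ) : Fin 3 → ℝ := ![U 4, U 5, U 6]

/-- Velocity components `v = m / ρ`. -/
def velC (U : Fin 8 → ℝ) : Fin 3 → ℝ := fun j => mC U j / U 0

/-- Internal energy `𝓔(U) = E − (|m|²/ρ + |B|²)/2`. -/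
def intE (U : Fin 8 → ℝ) : ℝ := U 7 - (normSq3 (mC U) / U 0 + normSq3 (BC U)) / 2

/-- The admissible set `𝒢`. -/
def admisSet : Set (Fin 8 → ℝ) := {U | 0 < U 0 ∧ 0 < intE U}

/-- The vector `n* = (|v*|²/2, −v*, −B*, 1) ∈ ℝ⁸`. -/
def nstar (vs Bs : Fin 3 → ℝ) : Fin 8 → ℝ :=
  ![normSq3 vs / 2, -vs 0, -vs 1, -vs 2, -Bs 0, -Bs 1, -Bs 2, 1]

/-- Euclidean dot product on ℝ⁸. -/
def dot8 (U V : Fin 8 → ℝ) : ℝ := ∑ k, U k * V k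

/-- Flux `F_i(U)` of a state `U` with assigned pressure `p`, in direction `i`. -/
def flux (p : ℝ) (i : Fin 3) (U : Fin 8 → ℝ) : Fin 8 → ℝ :=
  let ρ := U 0
  let v := velC U
  let B := BC U
  let ptot := p + normSq3 B / 2
  ![ρ * v i,
    ρ * v i * v 0 - B i * B 0 + (if i = 0 then ptot else 0),
    ρ * v i * v 1 - B i * B 1 + (if i = 1 then ptot else 0),
    ρ * v i * v 2 - B i * B 2 + (if i = 2 then ptot else 0),
    v i * B 0 - B i * v 0,
    v i * B 1 - B i * v 1,
    v i * B 2 - B i * v 2,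
    v i * (U 7 + ptot) - B i * dot3 v B]

/-- The fast-speed-type quantity built from a sound-speed-like value `cs`:
`(1/√2)·√( cs² + |B|²/ρ + √((cs² + |B|²/ρ)² − 4cs²B_i²/ρ) )`. -/
def fastLike (cs : ℝ) (U : Fin 8 → ℝ) (i : Fin 3) : ℝ :=
  (1 / Real.sqrt 2) *
    Real.sqrt (cs ^ 2 + normSq3 (BC U) / U 0 +
      Real.sqrt ((cs ^ 2 + normSq3 (BC U) / U 0) ^ 2 - 4 * cs ^ 2 * (BC U i) ^ 2 / U 0))

/-- `𝓢_s = p/(ρ√(2e))` for a state `U` with pressure `p`. -/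
def sSound (p : ℝ) (U : Fin 8 → ℝ) : ℝ :=
  p / (U 0 * Real.sqrt (2 * (intE U / U 0)))

/-- `𝓢_i` for a state `U` with pressure `p`. -/
def sFast (p : ℝ) (U : Fin 8 → ℝ) (i : Fin 3) : ℝ := fastLike (sSound p U) U i

/-- `f(U, Ũ; σ) = (|B̃ − B|/√2)·√(σ²/ρ + (1−σ)²/ρ̃)`. -/
def fCoup (U Ut : Fin 8 → ℝ) (σ : ℝ) : ℝ :=
  (Real.sqrt (normSq3 (fun j => BC Ut j - BC U j)) / Real.sqrt 2) *
    Real.sqrt (σ ^ 2 / U 0 + (1 - σ) ^ 2 / Ut 0)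

/-- `α_i(U, Ũ; σ)` for states `U, Ũ` with pressures `p, p̃`. -/
def alphaSig (i : Fin 3) (U Ut : Fin 8 → ℝ) (p pt : ℝ) (σ : ℝ) : ℝ :=
  max (max (|velC U i| + sFast p U i) (|velC Ut i| + sFast pt Ut i))
      (|σ * velC U i + (1 - σ) * velC Ut i| + max (sFast p U i) (sFast pt Ut i))
  + fCoup U Ut σ

/-- `α_i(U, Ũ) = inf_{σ ∈ ℝ} α_i(U, Ũ; σ)`. -/
def alphaInf (i : Fin 3) (U Ut : Fin 8 → ℝ) (p pt : ℝ) : ℝ :=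
  ⨅ σ : ℝ, alphaSig i U Ut p pt σ

/-- Ideal-EOS pressure `p = (γ−1)ρe = (γ−1)𝓔(U)`. -/
def idealP (γ : ℝ) (U : Fin 8 → ℝ) : ℝ := (γ - 1) * intE U

/-- Ideal-EOS sound speed `𝓒_s = √(γp/ρ)`. -/
def cSound (γ : ℝ) (U : Fin 8 → ℝ) : ℝ := Real.sqrt (γ * idealP γ U / U 0)

/-- Ideal-EOS fast speed `𝓒_i`. -/
def cFast (γ : ℝ) (U : Fin 8 → ℝ) (i : Fin 3) : ℝ := fastLike (cSound γ U) U i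

/-- Ideal-EOS spectral radius `𝓡_i(U) = |v_i| + 𝓒_i`. -/
def specR (γ : ℝ) (i : Fin 3) (U : Fin 8 → ℝ) : ℝ := |velC U i| + cFast γ U i

/-- Pressure of a state under a general EOS function `P(ρ, e)`. -/
def presOf (P : ℝ → ℝ → ℝ) (U : Fin 8 → ℝ) : ℝ := P (U 0) (intE U / U 0)

/-- Lax–Friedrichs numerical flux with viscosity `α`, under EOS function `P`. -/
def lfFlux (P : ℝ → ℝ → ℝ) (α : ℝ) (i : Fin 3) (Um Up : Fin 8 → ℝ) : Fin 8 → ℝ :=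
  (1 / 2 : ℝ) • (flux (presOf P Um) i Um + flux (presOf P Up) i Up - α • (Up - Um))

/-- Lax–Friedrichs numerical flux with viscosity `α`, ideal EOS of index `γ`. -/
def lfFluxIdeal (γ : ℝ) (α : ℝ) (i : Fin 3) (Um Up : Fin 8 → ℝ) : Fin 8 → ℝ :=
  (1 / 2 : ℝ) • (flux (idealP γ Um) i Um + flux (idealP γ Up) i Up - α • (Up - Um))

section helper
variable (U : Fin 8 → ℝ) (vs Bs : Fin 3 → ℝ) (p : ℝ)
lemma ns0 : nstar vs Bs 0 = normSq3 vs / 2 := rfl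
lemma ns1 : nstar vs Bs 1 = -vs 0 := rfl
lemma ns2 : nstar vs Bs 2 = -vs 1 := rfl
lemma ns3 : nstar vs Bs 3 = -vs 2 := rfl
lemma ns4 : nstar vs Bs 4 = -Bs 0 := rfl
lemma ns5 : nstar vs Bs 5 = -Bs 1 := rfl
lemma ns6 : nstar vs Bs 6 = -Bs 2 := rfl
lemma ns7 : nstar vs Bs 7 = 1 := rfl
lemma mC0 : mC U 0 = U 1 := rfl
lemma mC1 : mC U 1 = U 2 := rfl
lemma mC2 : mC U 2 = U 3 := rfl
lemma BC0 : BC U 0 = U 4 := rfl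
lemma BC1 : BC U 1 = U 5 := rfl
lemma BC2 : BC U 2 = U 6 := rfl
lemma fl0 : flux p 0 U 0 = U 0 * velC U 0 := rfl
lemma fl1 : flux p 0 U 1 = U 0 * velC U 0 * velC U 0 - BC U 0 * BC U 0 + (p + normSq3 (BC U) / 2) := by
  show _ + (if (0:Fin 3) = 0 then _ else 0) = _; rw [if_pos rfl]
lemma fl2 : flux p 0 U 2 = U 0 * velC U 0 * velC U 1 - BC U 0 * BC U 1 := by
  show _ + (if (0:Fin 3) = 1 then _ else 0) = _; rw [if_neg (by decide)]; ring
lemma fl3 : flux p 0 U 3 = U 0 * velC U 0 * velC U 2 - BC U 0 * BC U 2 := by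
  show _ + (if (0:Fin 3) = 2 then _ else 0) = _; rw [if_neg (by decide)]; ring
lemma fl4 : flux p 0 U 4 = velC U 0 * BC U 0 - BC U 0 * velC U 0 := rfl
lemma fl5 : flux p 0 U 5 = velC U 0 * BC U 1 - BC U 0 * velC U 1 := rfl
lemma fl6 : flux p 0 U 6 = velC U 0 * BC U 2 - BC U 0 * velC U 2 := rfl
lemma fl7 : flux p 0 U 7 = velC U 0 * (U 7 + (p + normSq3 (BC U) / 2)) - BC U 0 * dot3 (velC U) (BC U) := rfl
end helper

lemma lemA (U : Fin 8 → ℝ) (h0 : U 0 ≠ 0) (vs Bs : Fin 3 → ℝ) :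
    dot8 U (nstar vs Bs) + normSq3 Bs / 2
      = intE U + U 0 * normSq3 (fun j => velC U j - vs j) / 2
        + normSq3 (fun j => Bs j - BC U j) / 2 := by
  simp only [dot8, normSq3, intE, dot3, velC, Fin.sum_univ_eight, Fin.sum_univ_three,
    ns0, ns1, ns2, ns3, ns4, ns5, ns6, ns7, mC0, mC1, mC2, BC0, BC1, BC2]
  field_simp
  ring

lemma lemB (U : Fin 8 → ℝ) (h0 : U 0 ≠ 0) (vs Bs : Fin 3 → ℝ) (p : ℝ) :
    dot8 (flux p 0 U) (nstar vs Bs) + vs 0 * normSq3 Bs / 2 - U 4 * dot3 vs Bs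
      = velC U 0 * (intE U + U 0 * normSq3 (fun j => velC U j - vs j) / 2)
        + vs 0 * normSq3 (fun j => Bs j - BC U j) / 2
        + (velC U 0 - vs 0) * p
        + dot3 (fun j => Bs j - BC U j)
            (fun j => U 4 * (velC U j - vs j) - (velC U 0 - vs 0) * BC U j) := by
  simp only [dot8, normSq3, intE, dot3, Fin.sum_univ_eight, Fin.sum_univ_three,
    ns0, ns1, ns2, ns3, ns4, ns5, ns6, ns7, fl0, fl1, fl2, fl3, fl4, fl5, fl6, fl7]
  simp only [velC, mC0, mC1, mC2, BC0, BC1, BC2]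
  field_simp
  ring


lemma normSq3_BC (U : Fin 8 → ℝ) : normSq3 (BC U) = (U 4)^2 + (U 5)^2 + (U 6)^2 := by
  simp [normSq3, Fin.sum_univ_three, BC]

lemma sSound_pos (U : Fin 8 → ℝ) (hρ : 0 < U 0) (hE : 0 < intE U) (p : ℝ) (hp : 0 < p) :
    0 < sSound p U := by
  have he : 0 < intE U / U 0 := div_pos hE hρ
  have : 0 < Real.sqrt (2 * (intE U / U 0)) := Real.sqrt_pos.2 (by linarith)
  exact div_pos hp (by positivity)

/-- Core algebraic facts about the fast speed, on abstract reals. -/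
lemma mysq_le (a b : ℝ) (hb : 0 ≤ b) (h : a^2 ≤ b^2) : a ≤ b := by
  nlinarith

set_option maxHeartbeats 1000000 in
lemma sfacts_core (ρ c B1 B2 B3 S s : ℝ) (hρ : 0 < ρ) (hc : 0 < c)
    (hs0 : 0 ≤ s)
    (hs2 : ρ^2 * s^2 = (ρ*c^2 + (B1^2+B2^2+B3^2))^2 - 4*ρ*c^2*B1^2)
    (hSnn : 0 ≤ S)
    (hS2 : 2*ρ*S^2 = ρ*c^2 + (B1^2+B2^2+B3^2) + ρ*s) :
    0 < S ∧ B1^2 ≤ ρ * S^2 ∧ B2^2 + B3^2 ≤ ρ * (S^2 - c^2) ∧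
    (ρ * (S^2 - c^2) - (B2^2 + B3^2)) * (ρ * S^2 - B1^2) = B1^2 * (B2^2 + B3^2) := by
  have hN' : (ρ*c^2 - (B1^2+B2^2+B3^2))^2 + 4*ρ*c^2*(B2^2+B3^2)
      = ρ^2*s^2 := by rw [hs2]; ring
  have hsnn : 0 ≤ ρ * s := mul_nonneg hρ.le hs0
  have h4nn : 0 ≤ 4*ρ*c^2*(B2^2+B3^2) := by positivity
  have hs_ge1 : ρ*c^2 - (B1^2+B2^2+B3^2) ≤ ρ*s := by
    apply mysq_le _ _ hsnn; nlinarith [hN', h4nn]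
  have hs_ge2 : (B1^2+B2^2+B3^2) - ρ*c^2 ≤ ρ*s := by
    apply mysq_le _ _ hsnn; nlinarith [hN', h4nn]
  have hc2S : ρ*c^2 ≤ ρ*S^2 := by linarith
  have hNS : B1^2+B2^2+B3^2 ≤ ρ*S^2 := by linarith
  have hS2c : c^2 ≤ S^2 := le_of_mul_le_mul_left (by linarith) hρ
  have hSpos : 0 < S := by
    rcases hSnn.eq_or_lt with h | h
    · exfalso; rw [← h] at hc2S; nlinarith [mul_pos hρ (mul_pos hc hc)]
    · exact h
  have hq : ρ * (S^2*S^2) - (ρ*c^2 + (B1^2+B2^2+B3^2))*S^2 + c^2*B1^2 = 0 := by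
    have h4 : (4:ℝ)*ρ ≠ 0 := by positivity
    apply mul_left_cancel₀ h4
    rw [mul_zero]
    have e2 : (2*ρ*S^2 - (ρ*c^2 + (B1^2+B2^2+B3^2)))^2 = ρ^2 * s^2 := by
      rw [hS2]; ring
    rw [hs2] at e2; linear_combination e2
  have hC1 : B1^2 ≤ ρ*S^2 := by nlinarith [hNS, sq_nonneg B2, sq_nonneg B3]
  have hA1 : B2^2 + B3^2 ≤ ρ*(S^2 - c^2) := by
    have h5 : S^2 * (ρ*(S^2-c^2) - (B2^2+B3^2)) = B1^2*(S^2-c^2) := by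
      linear_combination hq
    nlinarith [h5, mul_pos hSpos hSpos, hS2c, sq_nonneg B1]
  refine ⟨hSpos, hC1, hA1, ?_⟩
  linear_combination ρ * hq

/-- Instantiation for an admissible state. -/
lemma sfacts (U : Fin 8 → ℝ) (hρ : 0 < U 0) (hE : 0 < intE U) (p : ℝ) (hp : 0 < p) :
    0 < sFast p U 0 ∧
    (U 4)^2 ≤ U 0 * (sFast p U 0)^2 ∧
    (U 5)^2 + (U 6)^2 ≤ U 0 * ((sFast p U 0)^2 - (sSound p U)^2) ∧
    (U 0 * ((sFast p U 0)^2 - (sSound p U)^2) - ((U 5)^2 + (U 6)^2))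
        * (U 0 * (sFast p U 0)^2 - (U 4)^2) = (U 4)^2 * ((U 5)^2 + (U 6)^2) := by
  have hc : 0 < sSound p U := sSound_pos U hρ hE p hp
  have hd : (sSound p U ^ 2 + normSq3 (BC U) / U 0) ^ 2
      - 4 * sSound p U ^ 2 * (BC U 0) ^ 2 / U 0
      = ((U 0 * sSound p U^2 - ((U 4)^2+(U 5)^2+(U 6)^2))^2
          + 4 * U 0 * sSound p U^2 * ((U 5)^2 + (U 6)^2)) / U 0^2 := by
    rw [normSq3_BC, BC0]; field_simp; ring
  have hd0 : 0 ≤ (sSound p U ^ 2 + normSq3 (BC U) / U 0) ^ 2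
      - 4 * sSound p U ^ 2 * (BC U 0) ^ 2 / U 0 := by
    rw [hd]; positivity
  have hs2' : (Real.sqrt ((sSound p U ^ 2 + normSq3 (BC U) / U 0) ^ 2
      - 4 * sSound p U ^ 2 * (BC U 0) ^ 2 / U 0))^2
      = (sSound p U ^ 2 + normSq3 (BC U) / U 0) ^ 2
      - 4 * sSound p U ^ 2 * (BC U 0) ^ 2 / U 0 := Real.sq_sqrt hd0
  have hargnn : 0 ≤ sSound p U ^ 2 + normSq3 (BC U) / U 0
      + Real.sqrt ((sSound p U ^ 2 + normSq3 (BC U) / U 0) ^ 2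
        - 4 * sSound p U ^ 2 * (BC U 0) ^ 2 / U 0) := by
    have h1 : 0 ≤ normSq3 (BC U) / U 0 := by rw [normSq3_BC]; positivity
    positivity
  have hS2 : 2 * (sFast p U 0)^2 = sSound p U ^ 2 + normSq3 (BC U) / U 0
      + Real.sqrt ((sSound p U ^ 2 + normSq3 (BC U) / U 0) ^ 2
        - 4 * sSound p U ^ 2 * (BC U 0) ^ 2 / U 0) := by
    show 2 * ((1 / Real.sqrt 2) * Real.sqrt _)^2 = _
    rw [mul_pow, div_pow, one_pow, Real.sq_sqrt (by norm_num : (0:ℝ) ≤ 2),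
      Real.sq_sqrt hargnn]
    ring
  have hSnn : 0 ≤ sFast p U 0 := by unfold sFast fastLike; positivity
  exact sfacts_core (U 0) (sSound p U) (U 4) (U 5) (U 6) (sFast p U 0) _ hρ hc
    (Real.sqrt_nonneg _)
    (by rw [hs2', hd]; field_simp; ring)
    hSnn
    (by
      rw [show (2:ℝ)*U 0*sFast p U 0^2 = U 0*(2*sFast p U 0^2) by ring, hS2,
        normSq3_BC, BC0]
      field_simp)

lemma normSq3_nonneg (a : Fin 3 → ℝ) : 0 ≤ normSq3 a :=
  Finset.sum_nonneg fun _ _ => sq_nonneg _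

lemma cs3 (a b : Fin 3 → ℝ) : |dot3 a b| ≤ Real.sqrt (normSq3 a) * Real.sqrt (normSq3 b) := by
  have h : (dot3 a b)^2 ≤ normSq3 a * normSq3 b := by
    simp only [dot3, normSq3, Fin.sum_univ_three]
    nlinarith [sq_nonneg (a 0*b 1 - a 1*b 0), sq_nonneg (a 0*b 2 - a 2*b 0),
      sq_nonneg (a 1*b 2 - a 2*b 1)]
  calc |dot3 a b| = Real.sqrt ((dot3 a b)^2) := (Real.sqrt_sq_eq_abs _).symm
  _ ≤ Real.sqrt (normSq3 a * normSq3 b) := Real.sqrt_le_sqrt h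
  _ = _ := Real.sqrt_mul (normSq3_nonneg a) _

set_option maxHeartbeats 1000000 in
lemma psi_core (ρ c S B1 Bp x y E p : ℝ) (hρ : 0 < ρ) (hx : 0 ≤ x) (hy : 0 ≤ y)
    (hB1 : 0 ≤ B1) (hBp : 0 ≤ Bp) (hS : 0 < S)
    (hC1 : B1^2 ≤ ρ*S^2) (hA1 : Bp^2 ≤ ρ*(S^2 - c^2))
    (hAC : (ρ*(S^2-c^2) - Bp^2)*(ρ*S^2 - B1^2) = B1^2*Bp^2)
    (hp : p = c*(ρ*E)) :
    2*S*x*p + (B1*y + Bp*x)^2 ≤ ρ*S^2*E^2 + ρ*S^2*x^2 + ρ*S^2*y^2 := by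
  have hA1' : 0 ≤ ρ*(S^2-c^2) - Bp^2 := by linarith
  have hC1' : 0 ≤ ρ*S^2 - B1^2 := by linarith
  have hxy : 0 ≤ x*y := mul_nonneg hx hy
  have hsum : 0 ≤ (ρ*(S^2-c^2) - Bp^2)*x^2 + (ρ*S^2 - B1^2)*y^2 + 2*(B1*Bp)*(x*y) := by
    have := mul_nonneg (mul_nonneg hB1 hBp) hxy
    have := mul_nonneg hA1' (sq_nonneg x)
    have := mul_nonneg hC1' (sq_nonneg y)
    linarith
  have sub1 : 2*(B1*Bp)*(x*y) ≤ (ρ*(S^2-c^2) - Bp^2)*x^2 + (ρ*S^2 - B1^2)*y^2 := by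
    have ha2 : Real.sqrt (ρ*(S^2-c^2) - Bp^2) ^ 2 = ρ*(S^2-c^2) - Bp^2 := Real.sq_sqrt hA1'
    have hb2 : Real.sqrt (ρ*S^2 - B1^2) ^ 2 = ρ*S^2 - B1^2 := Real.sq_sqrt hC1'
    have hK : B1*Bp = Real.sqrt (ρ*(S^2-c^2) - Bp^2) * Real.sqrt (ρ*S^2 - B1^2) := by
      rw [← Real.sqrt_mul hA1', hAC, ← mul_pow, Real.sqrt_sq (mul_nonneg hB1 hBp)]
    rw [hK]
    nlinarith [sq_nonneg (Real.sqrt (ρ*(S^2-c^2) - Bp^2) * x - Real.sqrt (ρ*S^2 - B1^2) * y),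
      ha2, hb2]
  rw [hp]
  nlinarith [sub1, mul_nonneg hρ.le (sq_nonneg (S*E - c*x))]


lemma cs2_aux (a b cc dd : ℝ) : (a*cc + b*dd)^2 ≤ (a^2+b^2)*(cc^2+dd^2) := by
  nlinarith [sq_nonneg (a*dd - b*cc)]

lemma nk_aux (U4 w0 w1 w2 U5 U6 x y bp : ℝ) (hx2 : x^2 = w0^2)
    (hy2 : y^2 = w1^2+w2^2) (hb2 : bp^2 = U5^2+U6^2)
    (hB1w : -(U4*w0*(w1*U5+w2*U6)) ≤ |U4| * x * (y*bp)) :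
    (U4*w1 - w0*U5)^2 + (U4*w2 - w0*U6)^2 ≤ (|U4| * y + bp*x)^2 := by
  nlinarith [hB1w, hx2, hy2, hb2, sq_abs U4]

lemma amgm_aux (S u v : ℝ) : 2*S*(u*v) ≤ S^2*u^2 + v^2 := by
  nlinarith [sq_nonneg (S*u - v)]

set_option maxHeartbeats 1000000 in
/-- Per-state key bound. -/
lemma lemC (U : Fin 8 → ℝ) (hρ : 0 < U 0) (hE : 0 < intE U) (p : ℝ) (hp : 0 < p)
    (w D : Fin 3 → ℝ) :
    |w 0 * p + dot3 D (fun j => U 4 * w j - w 0 * BC U j)|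
      ≤ sFast p U 0 * (intE U + U 0 * normSq3 w / 2 + normSq3 D / 2) := by
  obtain ⟨hS, hC1, hA1, hAC⟩ := sfacts U hρ hE p hp
  obtain ⟨K, hKdef⟩ : ∃ K, K = fun j => U 4 * w j - w 0 * BC U j := ⟨_, rfl⟩
  rw [← hKdef]
  obtain ⟨S, hSdef⟩ : ∃ S, S = sFast p U 0 := ⟨_, rfl⟩
  rw [← hSdef] at hS hC1 hA1 hAC ⊢
  obtain ⟨c, hcdef⟩ : ∃ c, c = sSound p U := ⟨_, rfl⟩
  rw [← hcdef] at hA1 hAC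
  have he : 0 ≤ 2 * (intE U / U 0) := by positivity
  obtain ⟨E, hEdef⟩ : ∃ E, E = Real.sqrt (2 * (intE U / U 0)) := ⟨_, rfl⟩
  obtain ⟨x, hxdef⟩ : ∃ x, x = |w 0| := ⟨_, rfl⟩
  obtain ⟨y, hydef⟩ : ∃ y, y = Real.sqrt ((w 1)^2 + (w 2)^2) := ⟨_, rfl⟩
  obtain ⟨bp, hbdef⟩ : ∃ bp, bp = Real.sqrt ((U 5)^2 + (U 6)^2) := ⟨_, rfl⟩
  have hx : 0 ≤ x := hxdef ▸ abs_nonneg _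
  have hx2 : x^2 = (w 0)^2 := hxdef ▸ sq_abs _
  have hy0 : 0 ≤ y := hydef ▸ Real.sqrt_nonneg _
  have hy2 : y^2 = (w 1)^2 + (w 2)^2 := hydef ▸ Real.sq_sqrt (by positivity)
  have hb0 : 0 ≤ bp := hbdef ▸ Real.sqrt_nonneg _
  have hb2 : bp^2 = (U 5)^2 + (U 6)^2 := hbdef ▸ Real.sq_sqrt (by positivity)
  have hE0 : 0 ≤ E := hEdef ▸ Real.sqrt_nonneg _
  have hE2 : U 0 * E^2 = 2 * intE U := by
    rw [hEdef, Real.sq_sqrt he]; field_simp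
  have hp' : p = c * (U 0 * E) := by
    have hEpos : 0 < Real.sqrt (2 * (intE U / U 0)) :=
      Real.sqrt_pos.2 (by positivity)
    rw [hcdef, hEdef, sSound]
    field_simp
  have hnD0 : 0 ≤ normSq3 D := normSq3_nonneg D
  have hnK0 : 0 ≤ normSq3 K := normSq3_nonneg K
  have hKexp : normSq3 K = (U 4 * w 1 - w 0 * U 5)^2 + (U 4 * w 2 - w 0 * U 6)^2 := by
    rw [hKdef]
    simp only [normSq3, Fin.sum_univ_three]
    show (U 4 * w 0 - w 0 * BC U 0)^2 + (U 4 * w 1 - w 0 * BC U 1)^2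
        + (U 4 * w 2 - w 0 * BC U 2)^2 = _
    rw [show BC U 0 = U 4 from rfl, show BC U 1 = U 5 from rfl, show BC U 2 = U 6 from rfl]
    ring
  have h2d : (w 1 * U 5 + w 2 * U 6)^2 ≤ (y*bp)^2 := by
    rw [mul_pow, hy2, hb2]
    exact cs2_aux (w 1) (w 2) (U 5) (U 6)
  have habs_t : |w 1 * U 5 + w 2 * U 6| ≤ y * bp := by
    have h := Real.sqrt_le_sqrt h2d
    rwa [Real.sqrt_sq_eq_abs, Real.sqrt_sq (mul_nonneg hy0 hb0)] at h
  have hB1w : -(U 4 * w 0 * (w 1*U 5 + w 2*U 6)) ≤ |U 4| * x * (y * bp) := by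
    calc -(U 4 * w 0 * (w 1*U 5 + w 2*U 6)) ≤ |U 4 * w 0 * (w 1*U 5 + w 2*U 6)| := neg_le_abs _
    _ = |U 4| * x * |w 1*U 5 + w 2*U 6| := by rw [abs_mul, abs_mul, hxdef]
    _ ≤ |U 4| * x * (y * bp) := by
        apply mul_le_mul_of_nonneg_left habs_t
        exact mul_nonneg (abs_nonneg _) hx
  have hnK : normSq3 K ≤ (|U 4| * y + bp * x)^2 := by
    rw [hKexp]
    exact nk_aux (U 4) (w 0) (w 1) (w 2) (U 5) (U 6) x y bp hx2 hy2 hb2 hB1w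
  have hDK : |dot3 D K| ≤ Real.sqrt (normSq3 D) * Real.sqrt (normSq3 K) := cs3 D K
  have hamgm : 2*S*(Real.sqrt (normSq3 D) * Real.sqrt (normSq3 K))
      ≤ S^2 * normSq3 D + normSq3 K := by
    have h := amgm_aux S (Real.sqrt (normSq3 D)) (Real.sqrt (normSq3 K))
    rwa [Real.sq_sqrt hnD0, Real.sq_sqrt hnK0] at h
  have core : 2*S*x*p + (|U 4| * y + bp*x)^2
      ≤ U 0*S^2*E^2 + U 0*S^2*x^2 + U 0*S^2*y^2 := by
    apply psi_core (U 0) c S (|U 4|) bp x y E p hρ hx hy0 (abs_nonneg _) hb0 hS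
    · rw [sq_abs]; exact hC1
    · rw [hb2]; exact hA1
    · rw [sq_abs, hb2]; exact hAC
    · exact hp'
  have hnW : normSq3 w = x^2 + y^2 := by
    simp only [normSq3, Fin.sum_univ_three]
    rw [hx2, hy2]; ring
  have habs : |w 0 * p + dot3 D K| ≤ x*p + Real.sqrt (normSq3 D) * Real.sqrt (normSq3 K) := by
    calc |w 0 * p + dot3 D K| ≤ |w 0 * p| + |dot3 D K| := abs_add_le _ _
    _ = x*p + |dot3 D K| := by rw [abs_mul, abs_of_pos hp, hxdef]
    _ ≤ _ := by linarith [hDK]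
  have main : (2*S) * |w 0 * p + dot3 D K|
      ≤ (2*S) * (S * (intE U + U 0 * normSq3 w / 2 + normSq3 D / 2)) := by
    have step1 : (2*S) * |w 0 * p + dot3 D K|
        ≤ (2*S) * (x*p + Real.sqrt (normSq3 D) * Real.sqrt (normSq3 K)) :=
      mul_le_mul_of_nonneg_left habs (by positivity)
    have step2 : (2*S) * (x*p + Real.sqrt (normSq3 D) * Real.sqrt (normSq3 K))
        ≤ 2*S*x*p + S^2 * normSq3 D + normSq3 K := by
      have e : (2*S) * (x*p + Real.sqrt (normSq3 D) * Real.sqrt (normSq3 K))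
          = 2*S*x*p + 2*S*(Real.sqrt (normSq3 D) * Real.sqrt (normSq3 K)) := by ring
      linarith [hamgm, e.le, e.ge]
    have step3 : 2*S*x*p + S^2 * normSq3 D + normSq3 K
        ≤ 2*S*x*p + S^2 * normSq3 D + (|U 4| * y + bp*x)^2 := by linarith [hnK]
    have step4 : 2*S*x*p + S^2 * normSq3 D + (|U 4| * y + bp*x)^2
        ≤ U 0*S^2*E^2 + U 0*S^2*x^2 + U 0*S^2*y^2 + S^2 * normSq3 D := by linarith [core]
    have step5 : U 0*S^2*E^2 + U 0*S^2*x^2 + U 0*S^2*y^2 + S^2 * normSq3 D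
        = (2*S) * (S * (intE U + U 0 * normSq3 w / 2 + normSq3 D / 2)) := by
      rw [hnW]
      linear_combination (S^2) * hE2
    linarith
  have h2S : (0:ℝ) < 2*S := by positivity
  exact le_of_mul_le_mul_left main h2S

lemma tmul_aux (t a b : ℝ) (ha : 0 ≤ a) (hb : 0 ≤ b) : t*(a-b) ≤ |t| * (a+b) := by
  nlinarith [mul_nonneg (sub_nonneg.2 (le_abs_self t)) ha,
    mul_nonneg (by linarith [neg_le_abs t] : (0:ℝ) ≤ |t| + t) hb]

lemma cs_sigma (σ ρh ρc wh wc : ℝ) (hρh : 0 < ρh) (hρc : 0 < ρc) :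
    (σ*wh + (1-σ)*wc)^2 ≤ (σ^2/ρh + (1-σ)^2/ρc)*(ρh*wh^2 + ρc*wc^2) := by
  have key : ((σ^2/ρh + (1-σ)^2/ρc)*(ρh*wh^2 + ρc*wc^2) - (σ*wh + (1-σ)*wc)^2)*(ρh*ρc)
      = (σ*ρc*wc - (1-σ)*ρh*wh)^2 := by
    field_simp; ring
  nlinarith [key, sq_nonneg (σ*ρc*wc - (1-σ)*ρh*wh), mul_pos hρh hρc]

lemma par_aux (a b : Fin 3 → ℝ) :
    normSq3 (fun j => a j + b j) ≤ 2*(normSq3 a + normSq3 b) := by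
  simp only [normSq3, Fin.sum_univ_three]
  nlinarith [sq_nonneg (a 0 - b 0), sq_nonneg (a 1 - b 1), sq_nonneg (a 2 - b 2)]

lemma n0_aux (a : Fin 3 → ℝ) : (a 0)^2 ≤ normSq3 a := by
  simp only [normSq3, Fin.sum_univ_three]
  nlinarith [sq_nonneg (a 1), sq_nonneg (a 2)]

lemma qp_aux (Q P : ℝ) : Q*P ≤ (Q^2+P^2)/2 := by nlinarith [sq_nonneg (Q-P)]

set_option maxHeartbeats 1000000 in
/-- Key combined inequality. -/
lemma lemD (Uh Uc : Fin 8 → ℝ) (hρh : 0 < Uh 0) (hEh : 0 < intE Uh)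
    (hρc : 0 < Uc 0) (hEc : 0 < intE Uc) (ph pc : ℝ) (hph : 0 < ph) (hpc : 0 < pc)
    (hB : Uh 4 = Uc 4) (σ : ℝ) (vs Bs : Fin 3 → ℝ) :
    dot8 (flux ph 0 Uh) (nstar vs Bs) - dot8 (flux pc 0 Uc) (nstar vs Bs)
      ≤ alphaSig 0 Uh Uc ph pc σ *
        ((intE Uh + Uh 0 * normSq3 (fun j => velC Uh j - vs j) / 2
            + normSq3 (fun j => Bs j - BC Uh j) / 2)
         + (intE Uc + Uc 0 * normSq3 (fun j => velC Uc j - vs j) / 2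
            + normSq3 (fun j => Bs j - BC Uc j) / 2)) := by
  have hGh := lemB Uh hρh.ne' vs Bs ph
  have hGc := lemB Uc hρc.ne' vs Bs pc
  rw [hB] at hGh
  -- per-state lemC bounds (beta-reduced)
  have hCh' := lemC Uh hρh hEh ph hph (fun j => velC Uh j - vs j) (fun j => Bs j - BC Uh j)
  have hCc' := lemC Uc hρc hEc pc hpc (fun j => velC Uc j - vs j) (fun j => Bs j - BC Uc j)
  beta_reduce at hCh' hCc'
  rw [hB] at hCh'
  have hCh := le_trans (le_abs_self _) hCh'
  have hCc := le_trans (neg_le_abs _) hCc'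
  -- notation
  have hh0 : 0 ≤ intE Uh + Uh 0 * normSq3 (fun j => velC Uh j - vs j) / 2 := by
    have := normSq3_nonneg (fun j => velC Uh j - vs j); positivity
  have hc0 : 0 ≤ intE Uc + Uc 0 * normSq3 (fun j => velC Uc j - vs j) / 2 := by
    have := normSq3_nonneg (fun j => velC Uc j - vs j); positivity
  have hnDh0 : 0 ≤ normSq3 (fun j => Bs j - BC Uh j) := normSq3_nonneg _
  have hnDc0 : 0 ≤ normSq3 (fun j => Bs j - BC Uc j) := normSq3_nonneg _
  -- velocity head bounds
  have hvh : velC Uh 0 * (intE Uh + Uh 0 * normSq3 (fun j => velC Uh j - vs j) / 2)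
      ≤ |velC Uh 0| * (intE Uh + Uh 0 * normSq3 (fun j => velC Uh j - vs j) / 2) :=
    mul_le_mul_of_nonneg_right (le_abs_self _) hh0
  have hvc : -(velC Uc 0 * (intE Uc + Uc 0 * normSq3 (fun j => velC Uc j - vs j) / 2))
      ≤ |velC Uc 0| * (intE Uc + Uc 0 * normSq3 (fun j => velC Uc j - vs j) / 2) := by
    have := mul_le_mul_of_nonneg_right (neg_le_abs (velC Uc 0)) hc0
    linarith
  -- split vs 0 = tv + mu
  have hδ : normSq3 (fun j => Bs j - BC Uh j) - normSq3 (fun j => Bs j - BC Uc j)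
      = dot3 (fun j => BC Uc j - BC Uh j)
          (fun j => (Bs j - BC Uh j) + (Bs j - BC Uc j)) := by
    simp only [normSq3, dot3, Fin.sum_univ_three]; ring
  have htv := tmul_aux (σ * velC Uh 0 + (1 - σ) * velC Uc 0)
      (normSq3 (fun j => Bs j - BC Uh j)) (normSq3 (fun j => Bs j - BC Uc j)) hnDh0 hnDc0
  -- mu-term bound
  obtain ⟨R, hRdef⟩ : ∃ R, R = Real.sqrt (σ^2/Uh 0 + (1-σ)^2/Uc 0) := ⟨_, rfl⟩
  obtain ⟨Q, hQdef⟩ : ∃ Q, Q = Real.sqrt (Uh 0 * (velC Uh 0 - vs 0)^2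
      + Uc 0 * (velC Uc 0 - vs 0)^2) := ⟨_, rfl⟩
  obtain ⟨P, hPdef⟩ : ∃ P, P = Real.sqrt (normSq3 (fun j => Bs j - BC Uh j)
      + normSq3 (fun j => Bs j - BC Uc j)) := ⟨_, rfl⟩
  obtain ⟨nδ, hnδdef⟩ : ∃ nδ, nδ = normSq3 (fun j => BC Uc j - BC Uh j) := ⟨_, rfl⟩
  have hR0 : 0 ≤ R := hRdef ▸ Real.sqrt_nonneg _
  have hR2 : R^2 = σ^2/Uh 0 + (1-σ)^2/Uc 0 := hRdef ▸ Real.sq_sqrt (by positivity)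
  have hQ0 : 0 ≤ Q := hQdef ▸ Real.sqrt_nonneg _
  have hQ2 : Q^2 = Uh 0 * (velC Uh 0 - vs 0)^2 + Uc 0 * (velC Uc 0 - vs 0)^2 :=
    hQdef ▸ Real.sq_sqrt (by positivity)
  have hP0 : 0 ≤ P := hPdef ▸ Real.sqrt_nonneg _
  have hP2 : P^2 = normSq3 (fun j => Bs j - BC Uh j) + normSq3 (fun j => Bs j - BC Uc j) :=
    hPdef ▸ Real.sq_sqrt (by positivity)
  have hnδ0 : 0 ≤ nδ := hnδdef ▸ normSq3_nonneg _
  have hsδ0 : 0 ≤ Real.sqrt nδ := Real.sqrt_nonneg _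
  -- |mu| ≤ R*Q
  have hmu : |vs 0 - (σ * velC Uh 0 + (1 - σ) * velC Uc 0)| ≤ R * Q := by
    apply mysq_le _ _ (mul_nonneg hR0 hQ0)
    rw [sq_abs, mul_pow, hR2, hQ2]
    have h1 : (vs 0 - (σ * velC Uh 0 + (1 - σ) * velC Uc 0))^2
        = (σ * (velC Uh 0 - vs 0) + (1-σ) * (velC Uc 0 - vs 0))^2 := by ring
    rw [h1]
    exact cs_sigma σ (Uh 0) (Uc 0) _ _ hρh hρc
  -- |dot3 δ (Dh+Dc)| ≤ √nδ * (√2 * P)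
  have hdot : |dot3 (fun j => BC Uc j - BC Uh j)
      (fun j => (Bs j - BC Uh j) + (Bs j - BC Uc j))|
      ≤ Real.sqrt nδ * (Real.sqrt 2 * P) := by
    refine le_trans (cs3 _ _) ?_
    rw [← hnδdef]
    apply mul_le_mul_of_nonneg_left _ hsδ0
    have h1 : normSq3 (fun j => (Bs j - BC Uh j) + (Bs j - BC Uc j))
        ≤ 2 * (normSq3 (fun j => Bs j - BC Uh j) + normSq3 (fun j => Bs j - BC Uc j)) :=
      par_aux _ _
    calc Real.sqrt (normSq3 (fun j => (Bs j - BC Uh j) + (Bs j - BC Uc j)))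
        ≤ Real.sqrt (2 * (normSq3 (fun j => Bs j - BC Uh j)
            + normSq3 (fun j => Bs j - BC Uc j))) := Real.sqrt_le_sqrt h1
      _ = Real.sqrt 2 * P := by
          rw [hPdef, Real.sqrt_mul (by norm_num : (0:ℝ) ≤ 2)]
  -- mu * dot ≤ √2 √nδ R (Q P)
  have hmudot : (vs 0 - (σ * velC Uh 0 + (1 - σ) * velC Uc 0)) *
      dot3 (fun j => BC Uc j - BC Uh j) (fun j => (Bs j - BC Uh j) + (Bs j - BC Uc j))
      ≤ Real.sqrt 2 * Real.sqrt nδ * R * (Q * P) := by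
    calc (vs 0 - (σ * velC Uh 0 + (1 - σ) * velC Uc 0)) * dot3 _ _
        ≤ |(vs 0 - (σ * velC Uh 0 + (1 - σ) * velC Uc 0)) * dot3 _ _| := le_abs_self _
      _ = |vs 0 - (σ * velC Uh 0 + (1 - σ) * velC Uc 0)| * |dot3 _ _| := abs_mul _ _
      _ ≤ (R * Q) * (Real.sqrt nδ * (Real.sqrt 2 * P)) := by
          apply mul_le_mul hmu hdot (abs_nonneg _) (mul_nonneg hR0 hQ0)
      _ = Real.sqrt 2 * Real.sqrt nδ * R * (Q * P) := by ring
  have hQP : Real.sqrt 2 * Real.sqrt nδ * R * (Q * P)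
      ≤ Real.sqrt 2 * Real.sqrt nδ * R * ((Q^2 + P^2)/2) := by
    apply mul_le_mul_of_nonneg_left (qp_aux Q P)
    positivity
  -- 2 f = √2 √nδ R
  have h2f : Real.sqrt 2 * Real.sqrt nδ * R = 2 * fCoup Uh Uc σ := by
    rw [fCoup, ← hnδdef, ← hRdef]
    have h22 : Real.sqrt 2 * Real.sqrt 2 = 2 := Real.mul_self_sqrt (by norm_num)
    have hs2pos : (0:ℝ) < Real.sqrt 2 := Real.sqrt_pos.2 (by norm_num)
    field_simp
    linear_combination (Real.sqrt nδ * R) * h22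
  have hf0 : 0 ≤ fCoup Uh Uc σ := by unfold fCoup; positivity
  -- f * (Q²/2+P²/2) ≤ f * (Πh + Πc)
  have hQPi : (Q^2 + P^2)/2
      ≤ (intE Uh + Uh 0 * normSq3 (fun j => velC Uh j - vs j) / 2
          + normSq3 (fun j => Bs j - BC Uh j) / 2)
        + (intE Uc + Uc 0 * normSq3 (fun j => velC Uc j - vs j) / 2
          + normSq3 (fun j => Bs j - BC Uc j) / 2) := by
    rw [hQ2, hP2]
    have g1 := n0_aux (fun j => velC Uh j - vs j)
    have g2 := n0_aux (fun j => velC Uc j - vs j)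
    beta_reduce at g1 g2
    have g1' := mul_le_mul_of_nonneg_left g1 hρh.le
    have g2' := mul_le_mul_of_nonneg_left g2 hρc.le
    linarith
  have hfQPi : fCoup Uh Uc σ * ((Q^2 + P^2)/2)
      ≤ fCoup Uh Uc σ *
        ((intE Uh + Uh 0 * normSq3 (fun j => velC Uh j - vs j) / 2
            + normSq3 (fun j => Bs j - BC Uh j) / 2)
         + (intE Uc + Uc 0 * normSq3 (fun j => velC Uc j - vs j) / 2
            + normSq3 (fun j => Bs j - BC Uc j) / 2)) :=
    mul_le_mul_of_nonneg_left hQPi hf0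
  -- max bounds
  have hSh := (sfacts Uh hρh hEh ph hph).1
  have hSc := (sfacts Uc hρc hEc pc hpc).1
  obtain ⟨A, hAdef⟩ : ∃ A, A = max (max (|velC Uh 0| + sFast ph Uh 0)
      (|velC Uc 0| + sFast pc Uc 0))
      (|σ * velC Uh 0 + (1 - σ) * velC Uc 0| + max (sFast ph Uh 0) (sFast pc Uc 0)) := ⟨_, rfl⟩
  have hA1 : |velC Uh 0| + sFast ph Uh 0 ≤ A := hAdef ▸ le_max_of_le_left (le_max_left _ _)
  have hA2 : |velC Uc 0| + sFast pc Uc 0 ≤ A := hAdef ▸ le_max_of_le_left (le_max_right _ _)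
  have hA3h : |σ * velC Uh 0 + (1 - σ) * velC Uc 0| + sFast ph Uh 0 ≤ A := by
    rw [hAdef]
    exact le_max_of_le_right (by gcongr; exact le_max_left _ _)
  have hA3c : |σ * velC Uh 0 + (1 - σ) * velC Uc 0| + sFast pc Uc 0 ≤ A := by
    rw [hAdef]
    exact le_max_of_le_right (by gcongr; exact le_max_right _ _)
  have hαeq : alphaSig 0 Uh Uc ph pc σ = A + fCoup Uh Uc σ := by rw [hAdef]; rfl
  -- product bounds with A
  have m1 : (|velC Uh 0| + sFast ph Uh 0) *
      (intE Uh + Uh 0 * normSq3 (fun j => velC Uh j - vs j) / 2)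
      ≤ A * (intE Uh + Uh 0 * normSq3 (fun j => velC Uh j - vs j) / 2) :=
    mul_le_mul_of_nonneg_right hA1 hh0
  have m2 : (|velC Uc 0| + sFast pc Uc 0) *
      (intE Uc + Uc 0 * normSq3 (fun j => velC Uc j - vs j) / 2)
      ≤ A * (intE Uc + Uc 0 * normSq3 (fun j => velC Uc j - vs j) / 2) :=
    mul_le_mul_of_nonneg_right hA2 hc0
  have m3 : (|σ * velC Uh 0 + (1 - σ) * velC Uc 0| + sFast ph Uh 0) *
      (normSq3 (fun j => Bs j - BC Uh j) / 2)
      ≤ A * (normSq3 (fun j => Bs j - BC Uh j) / 2) :=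
    mul_le_mul_of_nonneg_right hA3h (by linarith)
  have m4 : (|σ * velC Uh 0 + (1 - σ) * velC Uc 0| + sFast pc Uc 0) *
      (normSq3 (fun j => Bs j - BC Uc j) / 2)
      ≤ A * (normSq3 (fun j => Bs j - BC Uc j) / 2) :=
    mul_le_mul_of_nonneg_right hA3c (by linarith)
  rw [hαeq]
  have h2f' : Real.sqrt 2 * Real.sqrt nδ * R * ((Q^2 + P^2)/2)
      = 2 * fCoup Uh Uc σ * ((Q^2 + P^2)/2) := by rw [h2f]
  have hmuδ : (vs 0 - (σ * velC Uh 0 + (1 - σ) * velC Uc 0)) *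
      (normSq3 (fun j => Bs j - BC Uh j) - normSq3 (fun j => Bs j - BC Uc j))
      = (vs 0 - (σ * velC Uh 0 + (1 - σ) * velC Uc 0)) *
        dot3 (fun j => BC Uc j - BC Uh j)
          (fun j => (Bs j - BC Uh j) + (Bs j - BC Uc j)) := by rw [hδ]
  linarith [hGh, hGc, hCh, hCc, hvh, hvc, htv, hmuδ, hmudot, hQP, h2f', hfQPi,
    m1, m2, m3, m4]

lemma dens_aux (ρ v α : ℝ) (hρ : 0 < ρ) (hv : |v| < α) :
    0 < ρ + α⁻¹ * (ρ * v) ∧ 0 < ρ - α⁻¹ * (ρ * v) := by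
  have hα : 0 < α := lt_of_le_of_lt (abs_nonneg v) hv
  obtain ⟨h1, h2⟩ := abs_lt.mp hv
  constructor
  · have e : ρ + α⁻¹ * (ρ * v) = α⁻¹ * (ρ * (α + v)) := by field_simp
    rw [e]; exact mul_pos (inv_pos.2 hα) (mul_pos hρ (by linarith))
  · have e : ρ - α⁻¹ * (ρ * v) = α⁻¹ * (ρ * (α - v)) := by field_simp
    rw [e]; exact mul_pos (inv_pos.2 hα) (mul_pos hρ (by linarith))

set_option maxHeartbeats 1000000 in

/-- 1D generalized Lax–Friedrichs splitting property: if
`Û, Ǔ ∈ 𝒢` with pressures `p̂, p̌ > 0` satisfy `B̂₁ = B̌₁`, then for every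
`α > α₁(Û, Ǔ)`, the state `Ū = ½(Û − F₁(Û)/α + Ǔ + F₁(Ǔ)/α)` is in `𝒢`. -/
theorem gLF_splitting_1D (Uh Uc : Fin 8 → ℝ)
    (hUh : Uh ∈ admisSet) (hUc : Uc ∈ admisSet)
    (ph pc : ℝ) (hph : 0 < ph) (hpc : 0 < pc)
    (hB : Uh 4 = Uc 4) (α : ℝ) (hα : alphaInf 0 Uh Uc ph pc < α) :
    (1 / 2 : ℝ) • (Uh - α⁻¹ • flux ph 0 Uh + Uc + α⁻¹ • flux pc 0 Uc)
      ∈ admisSet := by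
  obtain ⟨hρh, hEh⟩ := hUh
  obtain ⟨hρc, hEc⟩ := hUc
  obtain ⟨σ, hσ⟩ : ∃ σ : ℝ, alphaSig 0 Uh Uc ph pc σ < α := exists_lt_of_ciInf_lt hα
  have hSh := (sfacts Uh hρh hEh ph hph).1
  have hSc := (sfacts Uc hρc hEc pc hpc).1
  have hf0 : 0 ≤ fCoup Uh Uc σ := by unfold fCoup; positivity
  have hvhA : |velC Uh 0| + sFast ph Uh 0 ≤ alphaSig 0 Uh Uc ph pc σ := by
    have h : |velC Uh 0| + sFast ph Uh 0
        ≤ max (max (|velC Uh 0| + sFast ph Uh 0) (|velC Uc 0| + sFast pc Uc 0))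
          (|σ * velC Uh 0 + (1 - σ) * velC Uc 0| + max (sFast ph Uh 0) (sFast pc Uc 0)) :=
      le_max_of_le_left (le_max_left _ _)
    unfold alphaSig; linarith
  have hvcA : |velC Uc 0| + sFast pc Uc 0 ≤ alphaSig 0 Uh Uc ph pc σ := by
    have h : |velC Uc 0| + sFast pc Uc 0
        ≤ max (max (|velC Uh 0| + sFast ph Uh 0) (|velC Uc 0| + sFast pc Uc 0))
          (|σ * velC Uh 0 + (1 - σ) * velC Uc 0| + max (sFast ph Uh 0) (sFast pc Uc 0)) :=
      le_max_of_le_left (le_max_right _ _)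
    unfold alphaSig; linarith
  have hvh : |velC Uh 0| < α := by linarith
  have hvc : |velC Uc 0| < α := by linarith
  have hα0 : 0 < α := lt_of_le_of_lt (abs_nonneg (velC Uh 0)) hvh
  obtain ⟨Ub, hUbdef⟩ : ∃ x, x = (1 / 2 : ℝ) • (Uh - α⁻¹ • flux ph 0 Uh + Uc
      + α⁻¹ • flux pc 0 Uc) := ⟨_, rfl⟩
  rw [← hUbdef]
  have hUbk : ∀ k, Ub k = (Uh k - α⁻¹ * flux ph 0 Uh k + Uc k + α⁻¹ * flux pc 0 Uc k) / 2 := by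
    intro k
    rw [hUbdef]
    simp only [Pi.smul_apply, Pi.add_apply, Pi.sub_apply, smul_eq_mul]
    ring
  -- density
  have hρb : 0 < Ub 0 := by
    have h0 : Ub 0 = (Uh 0 - α⁻¹ * (Uh 0 * velC Uh 0) + Uc 0
        + α⁻¹ * (Uc 0 * velC Uc 0)) / 2 := hUbk 0
    have d1 := (dens_aux (Uh 0) (velC Uh 0) α hρh hvh).2
    have d2 := (dens_aux (Uc 0) (velC Uc 0) α hρc hvc).1
    rw [h0]; linarith
  refine ⟨hρb, ?_⟩
  -- energy
  have hz1 : normSq3 (fun j => velC Ub j - velC Ub j) = 0 := by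
    simp [normSq3]
  have hz2 : normSq3 (fun j => BC Ub j - BC Ub j) = 0 := by
    simp [normSq3]
  have hAi := lemA Ub hρb.ne' (velC Ub) (BC Ub)
  rw [hz1, hz2] at hAi
  have hIntE : intE Ub = dot8 Ub (nstar (velC Ub) (BC Ub)) + normSq3 (BC Ub) / 2 := by
    linarith [hAi]
  have hdot8 : dot8 Ub (nstar (velC Ub) (BC Ub))
      = (dot8 Uh (nstar (velC Ub) (BC Ub))
          - α⁻¹ * dot8 (flux ph 0 Uh) (nstar (velC Ub) (BC Ub))
          + dot8 Uc (nstar (velC Ub) (BC Ub))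
          + α⁻¹ * dot8 (flux pc 0 Uc) (nstar (velC Ub) (BC Ub))) / 2 := by
    simp only [dot8, Fin.sum_univ_eight]
    rw [hUbk 0, hUbk 1, hUbk 2, hUbk 3, hUbk 4, hUbk 5, hUbk 6, hUbk 7]
    ring
  have hPiH := lemA Uh hρh.ne' (velC Ub) (BC Ub)
  have hPiC := lemA Uc hρc.ne' (velC Ub) (BC Ub)
  have key := lemD Uh Uc hρh hEh hρc hEc ph pc hph hpc hB σ (velC Ub) (BC Ub)
  have hPipos : 0 < (intE Uh + Uh 0 * normSq3 (fun j => velC Uh j - velC Ub j) / 2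
        + normSq3 (fun j => BC Ub j - BC Uh j) / 2)
      + (intE Uc + Uc 0 * normSq3 (fun j => velC Uc j - velC Ub j) / 2
        + normSq3 (fun j => BC Ub j - BC Uc j) / 2) := by
    have n1 := normSq3_nonneg (fun j => velC Uh j - velC Ub j)
    have n2 := normSq3_nonneg (fun j => BC Ub j - BC Uh j)
    have n3 := normSq3_nonneg (fun j => velC Uc j - velC Ub j)
    have n4 := normSq3_nonneg (fun j => BC Ub j - BC Uc j)
    have p1 : 0 ≤ Uh 0 * normSq3 (fun j => velC Uh j - velC Ub j) := mul_nonneg hρh.le n1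
    have p2 : 0 ≤ Uc 0 * normSq3 (fun j => velC Uc j - velC Ub j) := mul_nonneg hρc.le n3
    linarith
  have hX : dot8 (flux ph 0 Uh) (nstar (velC Ub) (BC Ub))
      - dot8 (flux pc 0 Uc) (nstar (velC Ub) (BC Ub))
      < α * ((intE Uh + Uh 0 * normSq3 (fun j => velC Uh j - velC Ub j) / 2
          + normSq3 (fun j => BC Ub j - BC Uh j) / 2)
        + (intE Uc + Uc 0 * normSq3 (fun j => velC Uc j - velC Ub j) / 2
          + normSq3 (fun j => BC Ub j - BC Uc j) / 2)) :=
    lt_of_le_of_lt key (mul_lt_mul_of_pos_right hσ hPipos)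
  have hinv : 0 < α⁻¹ := inv_pos.2 hα0
  have hiX := mul_lt_mul_of_pos_left hX hinv
  have hcan : α⁻¹ * (α * ((intE Uh + Uh 0 * normSq3 (fun j => velC Uh j - velC Ub j) / 2
          + normSq3 (fun j => BC Ub j - BC Uh j) / 2)
        + (intE Uc + Uc 0 * normSq3 (fun j => velC Uc j - velC Ub j) / 2
          + normSq3 (fun j => BC Ub j - BC Uc j) / 2)))
      = (intE Uh + Uh 0 * normSq3 (fun j => velC Uh j - velC Ub j) / 2
          + normSq3 (fun j => BC Ub j - BC Uh j) / 2)
        + (intE Uc + Uc 0 * normSq3 (fun j => velC Uc j - velC Ub j) / 2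
          + normSq3 (fun j => BC Ub j - BC Uc j) / 2) := by
    rw [← mul_assoc, inv_mul_cancel₀ hα0.ne', one_mul]
  rw [hcan] at hiX
  rw [hIntE, hdot8]
  linarith [hPiH, hPiC, hiX]
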